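/- Let P be a set of n points in ℝ² and suppose a single line or circle C contains exactly εn points of P, where 0 < ε < 1. Then the number of distinct perpendicular bisectors determined by pairs of distinct points of P is at least min(ε, 1−ε) · ε · n²/4. -/

import Mathlib

open scoped Classical

noncomputable section

def bisector (a b : EuclideanSpace ℝ (Fin 2)) : Set (EuclideanSpace ℝ (Fin 2)) :=
  {x | dist x a = dist x b}

def IsCircleOrLine (C : Set (EuclideanSpace ℝ (Fin 2))) : Prop :=
  (∃ o r, 0 < r ∧ C = Metric.sphere o r) ∨
  (∃ (v : EuclideanSpace ℝ (Fin 2)) (t : ℝ), v ≠ 0 ∧ C = {x | (inner ℝ v x : ℝ) = t})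


open scoped RealInnerProductSpace

namespace BisAux

abbrev E2 := EuclideanSpace ℝ (Fin 2)

lemma pt_ext {x y : E2} (h0 : x 0 = y 0) (h1 : x 1 = y 1) : x = y := by
  ext i; fin_cases i <;> assumption

lemma pt_ne {x y : E2} (h : x ≠ y) : ¬ (x 0 = y 0 ∧ x 1 = y 1) :=
  fun ⟨h0, h1⟩ => h (pt_ext h0 h1)

lemma sumsq_ne {x0 x1 y0 y1 : ℝ} (h : ¬ (x0 = y0 ∧ x1 = y1)) :
    (x0 - y0)^2 + (x1 - y1)^2 ≠ 0 := by
  intro hc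
  exact h ⟨by nlinarith [sq_nonneg (x0-y0), sq_nonneg (x1-y1)],
           by nlinarith [sq_nonneg (x0-y0), sq_nonneg (x1-y1)]⟩

lemma coords_ne {x y : E2} (h : x ≠ y) : (x 0 - y 0)^2 + (x 1 - y 1)^2 ≠ 0 :=
  sumsq_ne (pt_ne h)

lemma dist_sq_coords (x y : E2) : dist x y ^ 2 = (x 0 - y 0)^2 + (x 1 - y 1)^2 := by
  rw [EuclideanSpace.dist_eq, Real.sq_sqrt (by positivity)]
  simp [Fin.sum_univ_two, Real.dist_eq, sq_abs]

lemma dist_eq_of_sq {p q r s : E2} (h : dist p q ^ 2 = dist r s ^ 2) : dist p q = dist r s := by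
  nlinarith [dist_nonneg (x := p) (y := q), dist_nonneg (x := r) (y := s)]

def lf (a b x : E2) : ℝ :=
  (x 0 - (a 0 + b 0)/2) * (b 0 - a 0) + (x 1 - (a 1 + b 1)/2) * (b 1 - a 1)

def sq2 (a b : E2) : ℝ := (b 0 - a 0)^2 + (b 1 - a 1)^2

lemma sq2_ne {a b : E2} (h : a ≠ b) : sq2 a b ≠ 0 := by
  have := coords_ne h.symm
  simpa [sq2] using this

lemma mem_bisector_iff {a b x : E2} : x ∈ bisector a b ↔ lf a b x = 0 := by
  show dist x a = dist x b ↔ _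
  constructor
  · intro h
    have h2 : dist x a ^ 2 = dist x b ^ 2 := by rw [h]
    rw [dist_sq_coords, dist_sq_coords] at h2
    unfold lf; linear_combination h2 / 2
  · intro h
    apply dist_eq_of_sq
    rw [dist_sq_coords, dist_sq_coords]
    unfold lf at h; linear_combination 2 * h

def refl2 (a b x : E2) : E2 := x - (2 * lf a b x / sq2 a b) • (b - a)

lemma refl2_apply (a b x : E2) (i : Fin 2) :
    refl2 a b x i = x i - (2 * lf a b x / sq2 a b) * (b i - a i) := by
  simp [refl2]

lemma refl2_b {a b : E2} (h : a ≠ b) : refl2 a b b = a := by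
  have hW := sq2_ne h
  apply pt_ext <;> rw [refl2_apply] <;> unfold lf sq2 at * <;> field_simp <;> ring

lemma refl2_a {a b : E2} (h : a ≠ b) : refl2 a b a = b := by
  have hW := sq2_ne h
  apply pt_ext <;> rw [refl2_apply] <;> unfold lf sq2 at * <;> field_simp <;> ring

lemma refl2_isometry {a b : E2} (h : a ≠ b) (x y : E2) :
    dist (refl2 a b x) (refl2 a b y) = dist x y := by
  have hW := sq2_ne h
  apply dist_eq_of_sq
  rw [dist_sq_coords, dist_sq_coords]
  simp only [refl2_apply]
  unfold lf sq2 at *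
  field_simp
  ring

def mk2 (s t : ℝ) : E2 := (EuclideanSpace.equiv (Fin 2) ℝ).symm ![s, t]

lemma mk2_0 (s t : ℝ) : mk2 s t 0 = s := by simp [mk2]
lemma mk2_1 (s t : ℝ) : mk2 s t 1 = t := by simp [mk2]

lemma refl2_congr {a b a' b' : E2} (hab : a ≠ b) (hab' : a' ≠ b')
    (h : bisector a b = bisector a' b') (x : E2) : refl2 a b x = refl2 a' b' x := by
  have hW := sq2_ne hab
  have hW' := sq2_ne hab'
  set m : E2 := mk2 ((a 0 + b 0)/2) ((a 1 + b 1)/2) with hmdef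
  set q : E2 := mk2 ((a 0 + b 0)/2 - (b 1 - a 1)) ((a 1 + b 1)/2 + (b 0 - a 0)) with hqdef
  have hm0 : m 0 = (a 0 + b 0)/2 := mk2_0 _ _
  have hm1 : m 1 = (a 1 + b 1)/2 := mk2_1 _ _
  have hq0 : q 0 = (a 0 + b 0)/2 - (b 1 - a 1) := mk2_0 _ _
  have hq1 : q 1 = (a 1 + b 1)/2 + (b 0 - a 0) := mk2_1 _ _
  have hm' : lf a' b' m = 0 := by
    rw [← mem_bisector_iff, ← h, mem_bisector_iff]
    unfold lf; rw [hm0, hm1]; ring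
  have hq' : lf a' b' q = 0 := by
    rw [← mem_bisector_iff, ← h, mem_bisector_iff]
    unfold lf; rw [hq0, hq1]; ring
  have hcross : (b 0 - a 0) * (b' 1 - a' 1) - (b 1 - a 1) * (b' 0 - a' 0) = 0 := by
    unfold lf at hm' hq'
    rw [hm0, hm1] at hm'; rw [hq0, hq1] at hq'
    linear_combination hq' - hm'
  obtain ⟨s, hs0, hs1⟩ : ∃ s, b' 0 - a' 0 = s * (b 0 - a 0) ∧ b' 1 - a' 1 = s * (b 1 - a 1) := by
    refine ⟨((b 0 - a 0)*(b' 0 - a' 0) + (b 1 - a 1)*(b' 1 - a' 1)) / sq2 a b, ?_, ?_⟩ <;>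
      unfold sq2 at * <;> field_simp
    · linear_combination (-(b 1 - a 1)) * hcross
    · linear_combination (b 0 - a 0) * hcross
  have hs : s ≠ 0 := by
    intro h0
    apply sq2_ne hab'
    unfold sq2; rw [hs0, hs1, h0]; ring
  have hoff : (m 0 - (a' 0 + b' 0)/2) * (b 0 - a 0) + (m 1 - (a' 1 + b' 1)/2) * (b 1 - a 1) = 0 := by
    have hz : s * ((m 0 - (a' 0 + b' 0)/2) * (b 0 - a 0) + (m 1 - (a' 1 + b' 1)/2) * (b 1 - a 1)) = 0 := by
      unfold lf at hm'; rw [hs0, hs1] at hm'; linear_combination hm'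
    exact (mul_eq_zero.mp hz).resolve_left hs
  have hLf : lf a' b' x = s * lf a b x := by
    unfold lf at *
    rw [hs0, hs1]
    rw [hm0, hm1] at hoff
    linear_combination s * hoff
  have hsq : sq2 a' b' = s^2 * sq2 a b := by
    unfold sq2; rw [hs0, hs1]; ring
  apply pt_ext <;> rw [refl2_apply, refl2_apply, hLf, hsq]
  · rw [hs0]; field_simp
  · rw [hs1]; field_simp

lemma bisector_inj {a a' b : E2} (ha : a ≠ b) (ha' : a' ≠ b)
    (h : bisector a b = bisector a' b) : a = a' := by
  have := refl2_congr ha ha' h b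
  rwa [refl2_b ha, refl2_b ha'] at this

lemma bisector_of_refl2 {a b o : E2} (hab : a ≠ b) (hne : refl2 a b o ≠ o) :
    bisector o (refl2 a b o) = bisector a b := by
  have hW := sq2_ne hab
  have hg : lf a b o ≠ 0 := by
    intro h0
    apply hne
    apply pt_ext <;> rw [refl2_apply, h0] <;> simp
  obtain ⟨G, hG⟩ : ∃ g : ℝ, g = 2 * lf a b o / sq2 a b := ⟨_, rfl⟩
  have hGne : G ≠ 0 := by rw [hG]; exact div_ne_zero (mul_ne_zero two_ne_zero hg) hW
  have hGW : G * sq2 a b = 2 * lf a b o := by rw [hG]; field_simp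
  have hp0 : refl2 a b o 0 = o 0 - G * (b 0 - a 0) := by rw [hG]; exact refl2_apply a b o 0
  have hp1 : refl2 a b o 1 = o 1 - G * (b 1 - a 1) := by rw [hG]; exact refl2_apply a b o 1
  ext x
  rw [mem_bisector_iff, mem_bisector_iff]
  have key : lf o (refl2 a b o) x = -G * lf a b x := by
    unfold lf at hGW ⊢
    unfold sq2 at hGW
    rw [hp0, hp1]
    linear_combination (-(G)/2) * hGW
  rw [key]
  constructor
  · intro hh
    exact (mul_eq_zero.mp hh).resolve_left (neg_ne_zero.mpr hGne)
  · intro hh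
    rw [hh, mul_zero]

lemma perp_param {v0 v1 x0 x1 : ℝ} (hv : v0^2 + v1^2 ≠ 0) (h : v0*x0 + v1*x1 = 0) :
    ∃ t, x0 = -(t*v1) ∧ x1 = t*v0 := by
  refine ⟨(v0*x1 - v1*x0)/(v0^2+v1^2), ?_, ?_⟩ <;> field_simp
  · linear_combination v0 * h
  · linear_combination v1 * h

lemma three_pts {v0 v1 q0 q1 p10 p11 p20 p21 p30 p31 : ℝ}
    (hv : v0^2 + v1^2 ≠ 0)
    (ne12 : ¬(p20 = p10 ∧ p21 = p11)) (ne13 : ¬(p30 = p10 ∧ p31 = p11))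
    (ne23 : ¬(p30 = p20 ∧ p31 = p21))
    (l2 : v0*(p20 - p10) + v1*(p21 - p11) = 0) (l3 : v0*(p30 - p10) + v1*(p31 - p11) = 0)
    (c2 : (p20-q0)^2 + (p21-q1)^2 = (p10-q0)^2 + (p11-q1)^2)
    (c3 : (p30-q0)^2 + (p31-q1)^2 = (p10-q0)^2 + (p11-q1)^2) : False := by
  obtain ⟨t2, h20, h21⟩ := perp_param hv l2
  obtain ⟨t3, h30, h31⟩ := perp_param hv l3
  have hp20 : p20 = p10 - t2*v1 := by linarith
  have hp21 : p21 = p11 + t2*v0 := by linarith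
  have hp30 : p30 = p10 - t3*v1 := by linarith
  have hp31 : p31 = p11 + t3*v0 := by linarith
  have ht2 : t2 ≠ 0 := by
    rintro rfl; exact ne12 ⟨by linarith, by linarith⟩
  have ht3 : t3 ≠ 0 := by
    rintro rfl; exact ne13 ⟨by linarith, by linarith⟩
  have ht23 : t2 ≠ t3 := by
    intro hc
    exact ne23 ⟨by rw [hp30, hp20, hc], by rw [hp31, hp21, hc]⟩
  have e2 : t2 * (t2*(v0^2+v1^2) - 2*(v1*(p10-q0) - v0*(p11-q1))) = 0 := by
    rw [hp20, hp21] at c2; linear_combination c2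
  have e3 : t3 * (t3*(v0^2+v1^2) - 2*(v1*(p10-q0) - v0*(p11-q1))) = 0 := by
    rw [hp30, hp31] at c3; linear_combination c3
  have f2 : t2*(v0^2+v1^2) = 2*(v1*(p10-q0) - v0*(p11-q1)) := by
    have := (mul_eq_zero.mp e2).resolve_left ht2; linarith
  have f3 : t3*(v0^2+v1^2) = 2*(v1*(p10-q0) - v0*(p11-q1)) := by
    have := (mul_eq_zero.mp e3).resolve_left ht3; linarith
  exact ht23 (mul_right_cancel₀ hv (f2.trans f3.symm))



lemma inner_coords (x y : E2) : ⟪x, y⟫ = x 0 * y 0 + x 1 * y 1 := by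
  simp [PiLp.inner_apply, RCLike.inner_apply, Fin.sum_univ_two, mul_comm]

lemma circle_core {o b b' : E2} {r : ℝ} (hb : dist b o ≠ r) (hb' : dist b' o ≠ r)
    (hbb' : b ≠ b') {L1 L2 L3 : Set E2} (h12 : L1 ≠ L2) (h13 : L1 ≠ L3) (h23 : L2 ≠ L3)
    (H1 : ∃ a, dist a o = r ∧ bisector a b = L1) (H1' : ∃ a, dist a o = r ∧ bisector a b' = L1)
    (H2 : ∃ a, dist a o = r ∧ bisector a b = L2) (H2' : ∃ a, dist a o = r ∧ bisector a b' = L2)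
    (H3 : ∃ a, dist a o = r ∧ bisector a b = L3) (H3' : ∃ a, dist a o = r ∧ bisector a b' = L3) :
    False := by
  have key : ∀ (L : Set E2), (∃ a, dist a o = r ∧ bisector a b = L) →
      (∃ a, dist a o = r ∧ bisector a b' = L) →
      ∃ p : E2, dist p b = r ∧ dist p b' = r ∧ bisector o p = L := by
    rintro L ⟨a, ha, hL⟩ ⟨a', ha', hL'⟩
    have hab : a ≠ b := fun hc => hb (hc ▸ ha)
    have ha'b' : a' ≠ b' := fun hc => hb' (hc ▸ ha')
    have hpb : dist (refl2 a b o) b = r := by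
      calc dist (refl2 a b o) b = dist (refl2 a b o) (refl2 a b a) := by rw [refl2_a hab]
        _ = dist o a := refl2_isometry hab o a
        _ = r := by rw [dist_comm]; exact ha
    have hpb' : dist (refl2 a b o) b' = r := by
      have hco := refl2_congr hab ha'b' (hL.trans hL'.symm)
      calc dist (refl2 a b o) b' = dist (refl2 a' b' o) b' := by rw [hco o]
        _ = dist (refl2 a' b' o) (refl2 a' b' a') := by rw [refl2_a ha'b']
        _ = dist o a' := refl2_isometry ha'b' o a'
        _ = r := by rw [dist_comm]; exact ha'
    have hne : refl2 a b o ≠ o := by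
      intro hc
      rw [hc] at hpb
      exact hb (by rw [dist_comm]; exact hpb)
    exact ⟨refl2 a b o, hpb, hpb', by rw [← hL]; exact bisector_of_refl2 hab hne⟩
  obtain ⟨p1, hp1b, hp1b', hp1L⟩ := key L1 H1 H1'
  obtain ⟨p2, hp2b, hp2b', hp2L⟩ := key L2 H2 H2'
  obtain ⟨p3, hp3b, hp3b', hp3L⟩ := key L3 H3 H3'
  have hne12 : p2 ≠ p1 := fun hc => h12 (by rw [← hp1L, ← hp2L, hc])
  have hne13 : p3 ≠ p1 := fun hc => h13 (by rw [← hp1L, ← hp3L, hc])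
  have hne23 : p3 ≠ p2 := fun hc => h23 (by rw [← hp2L, ← hp3L, hc])
  have m1 : lf b b' p1 = 0 := mem_bisector_iff.mp (show dist p1 b = dist p1 b' from hp1b.trans hp1b'.symm)
  have m2 : lf b b' p2 = 0 := mem_bisector_iff.mp (show dist p2 b = dist p2 b' from hp2b.trans hp2b'.symm)
  have m3 : lf b b' p3 = 0 := mem_bisector_iff.mp (show dist p3 b = dist p3 b' from hp3b.trans hp3b'.symm)
  have c2 : (p2 0 - b 0)^2 + (p2 1 - b 1)^2 = (p1 0 - b 0)^2 + (p1 1 - b 1)^2 := by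
    have h2 : dist p2 b ^ 2 = dist p1 b ^ 2 := by rw [hp2b, hp1b]
    rwa [dist_sq_coords, dist_sq_coords] at h2
  have c3 : (p3 0 - b 0)^2 + (p3 1 - b 1)^2 = (p1 0 - b 0)^2 + (p1 1 - b 1)^2 := by
    have h2 : dist p3 b ^ 2 = dist p1 b ^ 2 := by rw [hp3b, hp1b]
    rwa [dist_sq_coords, dist_sq_coords] at h2
  have hv : (b' 0 - b 0)^2 + (b' 1 - b 1)^2 ≠ 0 := coords_ne (Ne.symm hbb')
  have l2 : (b' 0 - b 0)*(p2 0 - p1 0) + (b' 1 - b 1)*(p2 1 - p1 1) = 0 := by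
    unfold lf at m1 m2; linear_combination m2 - m1
  have l3 : (b' 0 - b 0)*(p3 0 - p1 0) + (b' 1 - b 1)*(p3 1 - p1 1) = 0 := by
    unfold lf at m1 m3; linear_combination m3 - m1
  exact three_pts hv (pt_ne hne12) (pt_ne hne13) (pt_ne hne23) l2 l3 c2 c3

lemma refl2_on_line {v a b b' : E2} {t : ℝ} (hab : a ≠ b)
    (ha : v 0 * a 0 + v 1 * a 1 = t)
    (h' : v 0 * refl2 a b b' 0 + v 1 * refl2 a b b' 1 = t) :
    ((v 0 * b 0 + v 1 * b 1) - (v 0 * b' 0 + v 1 * b' 1)) * ((b 0 - a 0)^2 + (b 1 - a 1)^2)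
      = 2 * ((v 0 * b 0 + v 1 * b 1) - t) * ((b 0 - b' 0)*(b 0 - a 0) + (b 1 - b' 1)*(b 1 - a 1)) := by
  have hW := sq2_ne hab
  obtain ⟨G, hG⟩ : ∃ g : ℝ, g = 2 * lf a b b' / sq2 a b := ⟨_, rfl⟩
  have hGW : G * sq2 a b = 2 * lf a b b' := by rw [hG]; field_simp
  have hp0 : refl2 a b b' 0 = b' 0 - G * (b 0 - a 0) := by rw [hG]; exact refl2_apply a b b' 0
  have hp1 : refl2 a b b' 1 = b' 1 - G * (b 1 - a 1) := by rw [hG]; exact refl2_apply a b b' 1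
  rw [hp0, hp1] at h'
  unfold lf sq2 at hGW
  linear_combination (-((b 0 - a 0)^2 + (b 1 - a 1)^2)) * h'
    + (G * ((b 0 - a 0)^2 + (b 1 - a 1)^2)) * ha
    + (-((v 0 * b 0 + v 1 * b 1) - t)) * hGW

lemma line_algebra {v0 v1 b0 b1 c0 c1 t x1 y1 x2 y2 x3 y3 : ℝ}
    (hv : v0^2 + v1^2 ≠ 0) (hd : (b0 - c0)^2 + (b1 - c1)^2 ≠ 0)
    (hβ : v0*b0 + v1*b1 - t ≠ 0)
    (ne12 : ¬(x2 = x1 ∧ y2 = y1)) (ne13 : ¬(x3 = x1 ∧ y3 = y1)) (ne23 : ¬(x3 = x2 ∧ y3 = y2))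
    (h1 : v0*x1 + v1*y1 = v0*b0 + v1*b1 - t)
    (h2 : v0*x2 + v1*y2 = v0*b0 + v1*b1 - t)
    (h3 : v0*x3 + v1*y3 = v0*b0 + v1*b1 - t)
    (g1 : ((v0*b0 + v1*b1) - (v0*c0 + v1*c1)) * (x1^2 + y1^2)
        = 2*((v0*b0 + v1*b1) - t) * ((b0 - c0)*x1 + (b1 - c1)*y1))
    (g2 : ((v0*b0 + v1*b1) - (v0*c0 + v1*c1)) * (x2^2 + y2^2)
        = 2*((v0*b0 + v1*b1) - t) * ((b0 - c0)*x2 + (b1 - c1)*y2))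
    (g3 : ((v0*b0 + v1*b1) - (v0*c0 + v1*c1)) * (x3^2 + y3^2)
        = 2*((v0*b0 + v1*b1) - t) * ((b0 - c0)*x3 + (b1 - c1)*y3)) : False := by
  by_cases hbb : v0*c0 + v1*c1 = v0*b0 + v1*b1
  · -- the two lines are "parallel" case: derive v = 0
    have hz1 : 2*((v0*b0 + v1*b1) - t) * ((b0 - c0)*x1 + (b1 - c1)*y1) = 0 := by
      linear_combination (-(x1^2 + y1^2)) * hbb - g1
    have hz2 : 2*((v0*b0 + v1*b1) - t) * ((b0 - c0)*x2 + (b1 - c1)*y2) = 0 := by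
      linear_combination (-(x2^2 + y2^2)) * hbb - g2
    have k1 : (b0 - c0)*x1 + (b1 - c1)*y1 = 0 :=
      (mul_eq_zero.mp hz1).resolve_left (mul_ne_zero two_ne_zero hβ)
    have k2 : (b0 - c0)*x2 + (b1 - c1)*y2 = 0 :=
      (mul_eq_zero.mp hz2).resolve_left (mul_ne_zero two_ne_zero hβ)
    have he : (x2 - x1)^2 + (y2 - y1)^2 ≠ 0 := sumsq_ne ne12
    have hde : (b0 - c0)*(x2 - x1) + (b1 - c1)*(y2 - y1) = 0 := by linear_combination k2 - k1
    have hve : (x2 - x1)*v0 + (y2 - y1)*v1 = 0 := by linear_combination h2 - h1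
    have hid : ((b0 - c0)*v1 - (b1 - c1)*v0) * ((x2 - x1)^2 + (y2 - y1)^2)
        = ((b0 - c0)*(x2 - x1) + (b1 - c1)*(y2 - y1)) * ((x2 - x1)*v1 - (y2 - y1)*v0)
          + ((b0 - c0)*(y2 - y1) - (b1 - c1)*(x2 - x1)) * ((x2 - x1)*v0 + (y2 - y1)*v1) := by
      ring
    rw [hde, hve] at hid
    simp only [zero_mul, mul_zero, add_zero] at hid
    have hcr : (b0 - c0)*v1 - (b1 - c1)*v0 = 0 := by
      rcases mul_eq_zero.mp hid with h | h
      · exact h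
      · exact absurd h he
    have hdv : (b0 - c0)*v0 + (b1 - c1)*v1 = 0 := by linear_combination -hbb
    have hv0 : v0 * ((b0 - c0)^2 + (b1 - c1)^2) = 0 := by
      linear_combination (b0 - c0)*hdv - (b1 - c1)*hcr
    have hv1 : v1 * ((b0 - c0)^2 + (b1 - c1)^2) = 0 := by
      linear_combination (b1 - c1)*hdv + (b0 - c0)*hcr
    have hv0' : v0 = 0 := (mul_eq_zero.mp hv0).resolve_right hd
    have hv1' : v1 = 0 := (mul_eq_zero.mp hv1).resolve_right hd
    exact hv (by rw [hv0', hv1']; ring)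
  · -- genuine circle case
    have hββ' : (v0*b0 + v1*b1) - (v0*c0 + v1*c1) ≠ 0 := sub_ne_zero.mpr (Ne.symm hbb)
    set q0 : ℝ := ((v0*b0 + v1*b1 - t) * (b0 - c0)) / ((v0*b0 + v1*b1) - (v0*c0 + v1*c1)) with hq0
    set q1 : ℝ := ((v0*b0 + v1*b1 - t) * (b1 - c1)) / ((v0*b0 + v1*b1) - (v0*c0 + v1*c1)) with hq1
    have l2 : v0*(x2 - x1) + v1*(y2 - y1) = 0 := by linear_combination h2 - h1
    have l3 : v0*(x3 - x1) + v1*(y3 - y1) = 0 := by linear_combination h3 - h1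
    have c2 : (x2 - q0)^2 + (y2 - q1)^2 = (x1 - q0)^2 + (y1 - q1)^2 := by
      rw [hq0, hq1]; field_simp
      linear_combination ((v0*b0 + v1*b1) - (v0*c0 + v1*c1)) * g2
        - ((v0*b0 + v1*b1) - (v0*c0 + v1*c1)) * g1
    have c3 : (x3 - q0)^2 + (y3 - q1)^2 = (x1 - q0)^2 + (y1 - q1)^2 := by
      rw [hq0, hq1]; field_simp
      linear_combination ((v0*b0 + v1*b1) - (v0*c0 + v1*c1)) * g3
        - ((v0*b0 + v1*b1) - (v0*c0 + v1*c1)) * g1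
    exact three_pts hv ne12 ne13 ne23 l2 l3 c2 c3

lemma line_core {v b b' : E2} {t : ℝ} (hv : v ≠ 0)
    (hb : ¬ (⟪v, b⟫ = t)) (hb' : ¬ (⟪v, b'⟫ = t)) (hbb' : b ≠ b')
    {L1 L2 L3 : Set E2} (h12 : L1 ≠ L2) (h13 : L1 ≠ L3) (h23 : L2 ≠ L3)
    (H1 : ∃ a, ⟪v, a⟫ = t ∧ bisector a b = L1) (H1' : ∃ a, ⟪v, a⟫ = t ∧ bisector a b' = L1)
    (H2 : ∃ a, ⟪v, a⟫ = t ∧ bisector a b = L2) (H2' : ∃ a, ⟪v, a⟫ = t ∧ bisector a b' = L2)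
    (H3 : ∃ a, ⟪v, a⟫ = t ∧ bisector a b = L3) (H3' : ∃ a, ⟪v, a⟫ = t ∧ bisector a b' = L3) :
    False := by
  rw [inner_coords] at hb hb'
  have key : ∀ (L : Set E2), (∃ a, ⟪v, a⟫ = t ∧ bisector a b = L) →
      (∃ a, ⟪v, a⟫ = t ∧ bisector a b' = L) →
      ∃ a : E2, (v 0 * a 0 + v 1 * a 1 = t) ∧
        (v 0 * refl2 a b b' 0 + v 1 * refl2 a b b' 1 = t) ∧ bisector a b = L := by
    rintro L ⟨a, ha, hL⟩ ⟨a', ha', hL'⟩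
    rw [inner_coords] at ha ha'
    have hab : a ≠ b := fun hc => hb (hc ▸ ha)
    have ha'b' : a' ≠ b' := fun hc => hb' (hc ▸ ha')
    have hco := refl2_congr hab ha'b' (hL.trans hL'.symm) b'
    rw [refl2_b ha'b'] at hco
    exact ⟨a, ha, by rw [hco]; exact ha', hL⟩
  obtain ⟨a1, ha1, h'1, hL1⟩ := key L1 H1 H1'
  obtain ⟨a2, ha2, h'2, hL2⟩ := key L2 H2 H2'
  obtain ⟨a3, ha3, h'3, hL3⟩ := key L3 H3 H3'
  have hab1 : a1 ≠ b := fun hc => hb (hc ▸ ha1)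
  have hab2 : a2 ≠ b := fun hc => hb (hc ▸ ha2)
  have hab3 : a3 ≠ b := fun hc => hb (hc ▸ ha3)
  have g1 := refl2_on_line hab1 ha1 h'1
  have g2 := refl2_on_line hab2 ha2 h'2
  have g3 := refl2_on_line hab3 ha3 h'3
  have hne12 : a2 ≠ a1 := fun hc => h12 (by rw [← hL1, ← hL2, hc])
  have hne13 : a3 ≠ a1 := fun hc => h13 (by rw [← hL1, ← hL3, hc])
  have hne23 : a3 ≠ a2 := fun hc => h23 (by rw [← hL2, ← hL3, hc])
  have hvc : v 0 ^2 + v 1 ^2 ≠ 0 := by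
    have := coords_ne (x := v) (y := 0) hv
    simpa using this
  have hdc : (b 0 - b' 0)^2 + (b 1 - b' 1)^2 ≠ 0 := coords_ne hbb'
  have hβ : v 0 * b 0 + v 1 * b 1 - t ≠ 0 := fun hc => hb (by linarith [hc])
  refine line_algebra (x1 := b 0 - a1 0) (y1 := b 1 - a1 1) (x2 := b 0 - a2 0)
    (y2 := b 1 - a2 1) (x3 := b 0 - a3 0) (y3 := b 1 - a3 1) hvc hdc hβ ?_ ?_ ?_
    ?_ ?_ ?_ ?_ ?_ ?_
  · intro ⟨u0, u1⟩; exact hne12 (pt_ext (by linarith) (by linarith))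
  · intro ⟨u0, u1⟩; exact hne13 (pt_ext (by linarith) (by linarith))
  · intro ⟨u0, u1⟩; exact hne23 (pt_ext (by linarith) (by linarith))
  · linear_combination -ha1
  · linear_combination -ha2
  · linear_combination -ha3
  · linear_combination g1
  · linear_combination g2
  · linear_combination g3

lemma inter_card_le_two {C : Set E2} (hC : IsCircleOrLine C) (P : Finset E2)
    {b b' : E2} (hbC : b ∉ C) (hb'C : b' ∉ C) (hne : b ≠ b') :
    (((P.filter (· ∈ C)).image (fun a => bisector a b)) ∩
     ((P.filter (· ∈ C)).image (fun a => bisector a b'))).card ≤ 2 := by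
  by_contra hcard
  obtain ⟨L1, L2, L3, hm1, hm2, hm3, h12, h13, h23⟩ :=
    Finset.two_lt_card_iff.mp (not_le.mp hcard)
  have unpack : ∀ {L}, L ∈ ((P.filter (· ∈ C)).image (fun a => bisector a b)) ∩
      ((P.filter (· ∈ C)).image (fun a => bisector a b')) →
      (∃ a, a ∈ C ∧ bisector a b = L) ∧ (∃ a, a ∈ C ∧ bisector a b' = L) := by
    intro L hL
    rcases Finset.mem_inter.mp hL with ⟨hL1, hL2⟩
    rcases Finset.mem_image.mp hL1 with ⟨a, haA, haeq⟩
    rcases Finset.mem_image.mp hL2 with ⟨a', ha'A, ha'eq⟩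
    exact ⟨⟨a, (Finset.mem_filter.mp haA).2, haeq⟩, ⟨a', (Finset.mem_filter.mp ha'A).2, ha'eq⟩⟩
  obtain ⟨u1, u1'⟩ := unpack hm1
  obtain ⟨u2, u2'⟩ := unpack hm2
  obtain ⟨u3, u3'⟩ := unpack hm3
  rcases hC with ⟨o, r, _hr, rfl⟩ | ⟨v, t, hv, rfl⟩
  · simp only [Metric.mem_sphere] at u1 u1' u2 u2' u3 u3' hbC hb'C
    exact circle_core hbC hb'C hne h12 h13 h23 u1 u1' u2 u2' u3 u3'
  · simp only [Set.mem_setOf_eq] at u1 u1' u2 u2' u3 u3' hbC hb'C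
    exact line_core hv hbC hb'C hne h12 h13 h23 u1 u1' u2 u2' u3 u3'

lemma bonferroni {γ : Type} [DecidableEq γ] (F : E2 → Finset γ) (s : Finset E2) :
    (∀ b ∈ s, ∀ b' ∈ s, b ≠ b' → (F b ∩ F b').card ≤ 2) →
    ∑ b ∈ s, (F b).card ≤ (s.biUnion F).card + s.card * (s.card - 1) := by
  induction s using Finset.induction_on with
  | empty => intro _; simp
  | @insert a s ha ih =>
    intro hp
    have hps : ∀ b ∈ s, ∀ b' ∈ s, b ≠ b' → (F b ∩ F b').card ≤ 2 :=
      fun x hx y hy => hp x (Finset.mem_insert_of_mem hx) y (Finset.mem_insert_of_mem hy)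
    have ih' := ih hps
    rw [Finset.sum_insert ha, Finset.biUnion_insert, Finset.card_insert_of_notMem ha]
    have hsub : F a ∩ s.biUnion F ⊆ s.biUnion (fun x => F a ∩ F x) := by
      intro y hy
      rcases Finset.mem_inter.mp hy with ⟨h1, h2⟩
      rcases Finset.mem_biUnion.mp h2 with ⟨x, hx, hyx⟩
      exact Finset.mem_biUnion.mpr ⟨x, hx, Finset.mem_inter.mpr ⟨h1, hyx⟩⟩
    have hbound : (F a ∩ s.biUnion F).card ≤ 2 * s.card := by
      calc (F a ∩ s.biUnion F).card ≤ (s.biUnion (fun x => F a ∩ F x)).card :=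
            Finset.card_le_card hsub
        _ ≤ ∑ x ∈ s, (F a ∩ F x).card := Finset.card_biUnion_le
        _ ≤ ∑ _x ∈ s, 2 := Finset.sum_le_sum (fun x hx =>
            hp a (Finset.mem_insert_self a s) x (Finset.mem_insert_of_mem hx)
              (fun hc => ha (hc ▸ hx)))
        _ = 2 * s.card := by rw [Finset.sum_const, smul_eq_mul, mul_comm]
    have hunion : (F a).card + (s.biUnion F).card
        = (F a ∪ s.biUnion F).card + (F a ∩ s.biUnion F).card :=
      (Finset.card_union_add_card_inter _ _).symm
    have harith : ∀ q : ℕ, q * (q - 1) + 2 * q ≤ (q + 1) * (q + 1 - 1) := by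
      intro q
      cases q with
      | zero => simp
      | succ r =>
        have : (r+1) * ((r+1) - 1) + 2*(r+1) = ((r+1)+1) * (((r+1)+1) - 1) := by
          simp only [Nat.add_sub_cancel]; ring
        exact le_of_eq this
    linarith [ih', hunion, hbound, harith s.card]

lemma count_arith {k j : ℕ} (hk : 1 ≤ k) (hj : 1 ≤ j) :
    min k j * k + 4 * ((min (k - k/2) j) * ((min (k - k/2) j) - 1))
      ≤ 4 * ((min (k - k/2) j) * k) := by
  rcases le_total (k - k/2) j with h | h
  · rw [min_eq_left h]
    obtain ⟨c', hc'⟩ : ∃ c', k - k/2 = c' + 1 := ⟨k - k/2 - 1, by omega⟩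
    rw [hc']
    have hmin : min k j * k ≤ k * k := mul_le_mul_left (min_le_left _ _) _
    have hk2 : k = 2*c' + 1 ∨ k = 2*c' + 2 := by omega
    simp only [Nat.add_sub_cancel]
    rcases hk2 with rfl | rfl <;> nlinarith [hmin]
  · rw [min_eq_right h]
    obtain ⟨j', rfl⟩ : ∃ j', j = j' + 1 := ⟨j - 1, by omega⟩
    have h4 : 4*j' ≤ 3*k := by omega
    have hminj : min k (j'+1) * k ≤ (j'+1) * k := mul_le_mul_left (min_le_right _ _) _
    simp only [Nat.add_sub_cancel]
    nlinarith [hminj, mul_le_mul_right h4 (j'+1)]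

end BisAux

open BisAux

/-- If a single line or circle contains exactly `ε n` of the `n` points of `P`, with
`0 < ε < 1`, then `P` determines at least `min ε (1-ε) · ε · n² / 4` distinct bisectors. -/
theorem bisectors_of_heavy_circle (P : Finset (EuclideanSpace ℝ (Fin 2))) (n : ℕ)
    (hn : P.card = n) (ε : ℝ) (hε0 : 0 < ε) (hε1 : ε < 1)
    (C : Set (EuclideanSpace ℝ (Fin 2))) (hC : IsCircleOrLine C)
    (hcount : ((P.filter (· ∈ C)).card : ℝ) = ε * n) :
    min ε (1 - ε) * ε * (n : ℝ) ^ 2 / 4 ≤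
      (Set.ncard {L : Set (EuclideanSpace ℝ (Fin 2)) |
        ∃ a ∈ P, ∃ b ∈ P, a ≠ b ∧ L = bisector a b} : ℝ) := by
  classical
  set T : Finset (Set (EuclideanSpace ℝ (Fin 2))) :=
    ((P ×ˢ P).filter (fun p => p.1 ≠ p.2)).image (fun p => bisector p.1 p.2) with hT
  have hST : {L : Set (EuclideanSpace ℝ (Fin 2)) | ∃ a ∈ P, ∃ b ∈ P, a ≠ b ∧ L = bisector a b}
      = ↑T := by
    ext L
    simp only [hT, Finset.coe_image, Set.mem_image, Finset.mem_coe, Finset.mem_filter,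
      Finset.mem_product, Set.mem_setOf_eq]
    constructor
    · rintro ⟨a, ha, b, hb, hab, rfl⟩; exact ⟨(a, b), ⟨⟨ha, hb⟩, hab⟩, rfl⟩
    · rintro ⟨⟨a, b⟩, ⟨⟨ha, hb⟩, hab⟩, rfl⟩; exact ⟨a, ha, b, hb, hab, rfl⟩
  rw [hST, Set.ncard_coe_finset]
  by_cases hn0 : n = 0
  · rw [hn0]; norm_num
  have hnpos : 0 < n := Nat.pos_of_ne_zero hn0
  have hn' : (0:ℝ) < n := by exact_mod_cast hnpos
  set k := (P.filter (· ∈ C)).card with hk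
  have hkpos : 0 < k := by
    have h1 : (0:ℝ) < ε * n := mul_pos hε0 hn'
    rw [← hcount] at h1
    exact_mod_cast h1
  set j := (P.filter (fun a => ¬ (a ∈ C))).card with hj
  have hkj : k + j = n := by
    rw [hk, hj, Finset.card_filter_add_card_filter_not, hn]
  have hjpos : 0 < j := by
    rcases Nat.eq_zero_or_pos j with h0 | h; swap
    · exact h
    have hkn : k = n := by omega
    have : ε * n = n := by rw [← hcount, hkn]
    nlinarith
  set m := min (k - k/2) j with hm
  have hmj : m ≤ (P.filter (fun a => ¬ (a ∈ C))).card := by rw [← hj]; exact min_le_right _ _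
  obtain ⟨B0, hB0sub, hB0card⟩ := Finset.exists_subset_card_eq hmj
  set F : EuclideanSpace ℝ (Fin 2) → Finset (Set (EuclideanSpace ℝ (Fin 2))) :=
    fun b => (P.filter (· ∈ C)).image (fun a => bisector a b) with hF
  have hnotC : ∀ b ∈ B0, b ∈ P ∧ b ∉ C := by
    intro b hb
    have := hB0sub hb
    rw [Finset.mem_filter] at this
    exact ⟨this.1, this.2⟩
  have hcardF : ∀ b ∈ B0, (F b).card = k := by
    intro b hb
    rw [hF, hk]
    apply Finset.card_image_of_injOn
    intro a ha a' ha' heq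
    exact bisector_inj
      (fun hc => (hnotC b hb).2 (by rw [← hc]; exact (Finset.mem_filter.mp ha).2))
      (fun hc => (hnotC b hb).2 (by rw [← hc]; exact (Finset.mem_filter.mp ha').2)) heq
  have hpair : ∀ b ∈ B0, ∀ b' ∈ B0, b ≠ b' → (F b ∩ F b').card ≤ 2 := by
    intro b hb b' hb' hbnb
    exact inter_card_le_two hC P (hnotC b hb).2 (hnotC b' hb').2 hbnb
  have hsum : ∑ b ∈ B0, (F b).card = m * k := by
    rw [Finset.sum_congr rfl hcardF, Finset.sum_const, hB0card, smul_eq_mul]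
  have hbon := bonferroni F B0 hpair
  rw [hsum, hB0card] at hbon
  have hsubT : B0.biUnion F ⊆ T := by
    intro L hL
    rcases Finset.mem_biUnion.mp hL with ⟨b, hb, hLb⟩
    rcases Finset.mem_image.mp hLb with ⟨a, ha, rfl⟩
    refine Finset.mem_image.mpr ⟨(a, b), ?_, rfl⟩
    refine Finset.mem_filter.mpr ⟨Finset.mem_product.mpr ⟨(Finset.mem_filter.mp ha).1,
      (hnotC b hb).1⟩, ?_⟩
    intro hc
    exact (hnotC b hb).2 (by rw [← show a = b from hc]; exact (Finset.mem_filter.mp ha).2)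
  have hTb : (B0.biUnion F).card ≤ T.card := Finset.card_le_card hsubT
  have harith := count_arith (k := k) (j := j) hkpos hjpos
  rw [← hm] at harith
  have hfinal : min k j * k ≤ 4 * T.card := by
    have h1 : 4 * (m*k) ≤ 4 * ((B0.biUnion F).card + m*(m-1)) := Nat.mul_le_mul_left _ hbon
    have h3 : 4 * (B0.biUnion F).card ≤ 4 * T.card := Nat.mul_le_mul_left _ hTb
    have h2 : 4 * ((B0.biUnion F).card + m*(m-1)) = 4*(B0.biUnion F).card + 4*(m*(m-1)) := by
      ring
    linarith [harith, h1, h3, h2]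
  have hkjR : (k:ℝ) + j = n := by exact_mod_cast hkj
  have hεk : ε = k / n := by
    rw [eq_div_iff (ne_of_gt hn')]; linarith [hcount]
  have h1ε : 1 - ε = j / n := by
    rw [hεk, eq_div_iff (ne_of_gt hn')]; field_simp; linarith [hkjR]
  rw [h1ε, hεk]
  have hgoal : min ((k:ℝ)/n) ((j:ℝ)/n) * ((k:ℝ)/n) * (n:ℝ)^2 / 4
      = ((min k j : ℕ):ℝ) * k / 4 := by
    rw [Nat.cast_min, min_div_div_right (le_of_lt hn')]
    field_simp
  rw [hgoal]
  have hfinalR : ((min k j : ℕ) : ℝ) * k ≤ 4 * T.card := by exact_mod_cast hfinal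
  linarith [hfinalR]
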